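/- Consider the Game of Graph Nim played on a galaxy graph G consisting of k pairwise-vertex-disjoint star graphs with centres u₁, …, u_k, where the i-th star has rays to vertices u_{i,1}, …, u_{i,ℓᵢ}. A configuration of edge weights is a losing position for the player to move if and only if the bitwise XOR of the numbers p₁, …, p_k is zero, where pᵢ is the sum of the weights of all edges of the i-th star. -/

import Mathlib

namespace GraphNim

variable {V E : Type} [Fintype E]

/-- A legal move in the Game of Graph Nim: choose a vertex `v` and weakly decrease
the weights of edges incident to `v` (all other edges unchanged), strictly
decreasing the total weight. -/
def Move (inc : V → E → Prop) (w w' : E → ℕ) : Prop :=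
  ∃ v : V, (∀ e, w' e ≤ w e) ∧ (∀ e, ¬ inc v e → w' e = w e) ∧
    (∑ e, w' e) < (∑ e, w e)

/-- A configuration is losing for the player to move: every legal move leads to a
non-losing configuration (the all-zero configuration is vacuously losing). -/
def Losing (inc : V → E → Prop) (w : E → ℕ) : Prop :=
  ∀ w', Move inc w w' → ¬ Losing inc w'
termination_by ∑ e, w e
decreasing_by
  rename_i h
  obtain ⟨v, _, _, h3⟩ := h
  exact h3

/-- A configuration is winning for the player to move: some legal move leads to a
losing configuration. -/
def Winning (inc : V → E → Prop) (w : E → ℕ) : Prop :=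
  ∃ w', Move inc w w' ∧ Losing inc w'

end GraphNim

open GraphNim

/-- Incidence of the galaxy graph consisting of `n` pairwise-vertex-disjoint star
graphs, where the `i`-th star has centre `Sum.inl i` and rays to the leaves
`Sum.inr ⟨i, t⟩` for `t : Fin (ℓ i)`; the edge `⟨i, t⟩` joins the centre of the
`i`-th star to its `t`-th leaf. -/
def galaxyInc (n : ℕ) (ℓ : Fin n → ℕ)
    (v : Fin n ⊕ Σ i : Fin n, Fin (ℓ i)) (e : Σ i : Fin n, Fin (ℓ i)) : Prop :=
  v = Sum.inl e.1 ∨ v = Sum.inr e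

private lemma natxorA (a b F : ℕ) : (b ^^^ F) ^^^ b ^^^ a = a ^^^ F := by
  apply Nat.eq_of_testBit_eq
  intro k
  simp only [Nat.testBit_xor]
  generalize a.testBit k = x
  generalize b.testBit k = y
  generalize F.testBit k = z
  cases x <;> cases y <;> cases z <;> rfl

private lemma natxorB (a x y z : ℕ) : a ^^^ (x ^^^ y ^^^ z) = (a ^^^ x) ^^^ y ^^^ z := by
  rw [Nat.xor_assoc, Nat.xor_assoc, ← Nat.xor_assoc a x]

private lemma natxorC (X p : ℕ) : X ^^^ p ^^^ (p ^^^ X) = 0 := by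
  apply Nat.eq_of_testBit_eq
  intro k
  simp only [Nat.testBit_xor, Nat.zero_testBit]
  generalize X.testBit k = x
  generalize p.testBit k = y
  cases x <;> cases y <;> rfl

private lemma foldr_xor_update {n : ℕ} (p q : Fin n → ℕ) (i : Fin n)
    (h : ∀ j, j ≠ i → q j = p j) :
    (List.ofFn q).foldr (· ^^^ ·) 0 = (List.ofFn p).foldr (· ^^^ ·) 0 ^^^ p i ^^^ q i := by
  induction n with
  | zero => exact i.elim0
  | succ m ih =>
    rw [List.ofFn_succ, List.ofFn_succ, List.foldr_cons, List.foldr_cons]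
    induction i using Fin.cases with
    | zero =>
      have htail : (List.ofFn fun j : Fin m => q j.succ) = List.ofFn fun j : Fin m => p j.succ := by
        congr 1
        funext j
        exact h j.succ (Fin.succ_ne_zero j)
      rw [htail, natxorA]
    | succ i =>
      have h0 : q 0 = p 0 := h 0 (by simp [Fin.ext_iff])
      have hrec := ih (fun j => p j.succ) (fun j => q j.succ) i
        (fun j hj => h j.succ (by simpa [Fin.ext_iff] using hj))
      rw [h0, hrec, natxorB]

private lemma exists_mem_testBit (k : ℕ) :
    ∀ (l : List ℕ), (l.foldr (· ^^^ ·) 0).testBit k = true → ∃ a ∈ l, a.testBit k = true := by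
  intro l
  induction l with
  | nil => simp
  | cons a l ih =>
    intro h
    rw [List.foldr_cons, Nat.testBit_xor] at h
    cases ha : a.testBit k with
    | true => exact ⟨a, List.mem_cons_self, ha⟩
    | false =>
      have : (l.foldr (· ^^^ ·) 0).testBit k = true := by
        rw [ha, Bool.false_xor] at h
        exact h
      obtain ⟨b, hb, hb'⟩ := ih this
      exact ⟨b, List.mem_cons_of_mem a hb, hb'⟩

private lemma exists_le_sum {N : ℕ} (f : Fin N → ℕ) (m : ℕ) (hm : m ≤ ∑ t, f t) :
    ∃ g : Fin N → ℕ, (∀ t, g t ≤ f t) ∧ ∑ t, g t = m := by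
  have key : ∀ d, d ≤ ∑ t, f t →
      ∃ g : Fin N → ℕ, (∀ t, g t ≤ f t) ∧ ∑ t, g t = ∑ t, f t - d := by
    intro d
    induction d with
    | zero => exact fun _ => ⟨f, fun t => le_rfl, by omega⟩
    | succ d ihd =>
      intro hd
      obtain ⟨g, hg1, hg2⟩ := ihd (by omega)
      have hpos : 0 < ∑ t, g t := by omega
      have : ∃ t, 0 < g t := by
        by_contra hc
        push_neg at hc
        simp only [Nat.le_zero] at hc
        simp [hc] at hpos
      obtain ⟨t, ht⟩ := this
      refine ⟨Function.update g t (g t - 1), ?_, ?_⟩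
      · intro s
        by_cases hs : s = t
        · subst hs; rw [Function.update_self]; exact le_trans (by omega) (hg1 s)
        · rw [Function.update_of_ne hs]; exact hg1 s
      · rw [Finset.sum_update_of_mem (Finset.mem_univ t)]
        have := Finset.sum_eq_sum_sdiff_singleton_add (Finset.mem_univ t) g
        omega
  obtain ⟨g, hg1, hg2⟩ := key (∑ t, f t - m) (by omega)
  exact ⟨g, hg1, by omega⟩

/-- On a galaxy graph of `n` stars, a configuration is losing for the player to
move iff the bitwise XOR of `p₁, …, pₙ` is zero, where `pᵢ` is the total weight
of the edges of the `i`-th star. -/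
theorem galaxy_losing_iff (n : ℕ) (ℓ : Fin n → ℕ)
    (w : (Σ i : Fin n, Fin (ℓ i)) → ℕ) :
    Losing (galaxyInc n ℓ) w ↔
      (List.ofFn fun i : Fin n => ∑ t : Fin (ℓ i), w ⟨i, t⟩).foldr (· ^^^ ·) 0 = 0 := by
  have hsig : ∀ f : (Σ j : Fin n, Fin (ℓ j)) → ℕ,
      ∑ e, f e = ∑ j, ∑ t : Fin (ℓ j), f ⟨j, t⟩ := by
    intro f
    rw [← Finset.univ_sigma_univ, Finset.sum_sigma]
  suffices H : ∀ s (w : (Σ i : Fin n, Fin (ℓ i)) → ℕ), ∑ e, w e = s →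
      (Losing (galaxyInc n ℓ) w ↔
        (List.ofFn fun i : Fin n => ∑ t : Fin (ℓ i), w ⟨i, t⟩).foldr (· ^^^ ·) 0 = 0) from
    H _ w rfl
  intro s
  induction s using Nat.strong_induction_on with
  | _ s ih =>
  intro w hw
  set p : Fin n → ℕ := fun i => ∑ t : Fin (ℓ i), w ⟨i, t⟩ with hp
  constructor
  · -- Losing → XOR = 0
    intro hL
    by_contra hX
    set X := (List.ofFn p).foldr (· ^^^ ·) 0 with hXdef
    obtain ⟨k, hk1, hk2⟩ := Nat.exists_most_significant_bit hX
    obtain ⟨a, ha, hak⟩ := exists_mem_testBit k _ hk1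
    rw [List.mem_ofFn] at ha
    obtain ⟨i, rfl⟩ := ha
    have hlt : p i ^^^ X < p i := by
      apply Nat.lt_of_testBit k
      · simp [Nat.testBit_xor, hak, hk1]
      · exact hak
      · intro j hj
        simp [Nat.testBit_xor, hk2 j hj]
    obtain ⟨g, hg1, hg2⟩ := exists_le_sum (fun t => w ⟨i, t⟩) (p i ^^^ X) hlt.le
    set w' : (Σ j : Fin n, Fin (ℓ j)) → ℕ :=
      fun e => if h : e.1 = i then g (Fin.cast (congrArg ℓ h) e.2) else w e with hw'def
    have hsame : ∀ e : Σ j : Fin n, Fin (ℓ j), e.1 ≠ i → w' e = w e := fun e h => dif_neg h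
    have hstar : ∀ t : Fin (ℓ i), w' ⟨i, t⟩ = g t := by
      intro t
      simp [hw'def]
    set q : Fin n → ℕ := fun j => ∑ t : Fin (ℓ j), w' ⟨j, t⟩ with hq
    have hqi : q i = p i ^^^ X := by
      rw [hq]
      simp only
      rw [← hg2]
      exact Finset.sum_congr rfl fun t _ => hstar t
    have hqj : ∀ j, j ≠ i → q j = p j := by
      intro j hj
      exact Finset.sum_congr rfl fun t _ => hsame ⟨j, t⟩ hj
    have hle : ∀ e, w' e ≤ w e := by
      rintro ⟨j, t⟩
      by_cases h : j = i
      · subst h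
        rw [hstar]
        exact hg1 t
      · rw [hsame ⟨j, t⟩ h]
    have hsumlt : ∑ e, w' e < ∑ e, w e := by
      rw [hsig, hsig]
      rw [← Finset.add_sum_erase _ _ (Finset.mem_univ i), ← Finset.add_sum_erase _ _ (Finset.mem_univ i)]
      have hrest : ∑ j ∈ Finset.univ.erase i, ∑ t : Fin (ℓ j), w' ⟨j, t⟩
          = ∑ j ∈ Finset.univ.erase i, ∑ t : Fin (ℓ j), w ⟨j, t⟩ :=
        Finset.sum_congr rfl fun j hj => hqj j (Finset.ne_of_mem_erase hj)
      have h1 : ∑ t : Fin (ℓ i), w' ⟨i, t⟩ = q i := rfl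
      have h2 : ∑ t : Fin (ℓ i), w ⟨i, t⟩ = p i := rfl
      rw [hrest, h1, h2, hqi]
      omega
    have hmove : Move (galaxyInc n ℓ) w w' := by
      refine ⟨Sum.inl i, hle, ?_, hsumlt⟩
      intro e he
      apply hsame
      intro hcon
      exact he (Or.inl (by rw [hcon]))
    rw [Losing] at hL
    have hnl := hL w' hmove
    apply hnl
    have := ih (∑ e, w' e) (hw ▸ hsumlt) w' rfl
    rw [this]
    have : (List.ofFn q).foldr (· ^^^ ·) 0 = X ^^^ p i ^^^ q i :=
      foldr_xor_update p q i hqj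
    show (List.ofFn q).foldr (· ^^^ ·) 0 = 0
    rw [this, hqi, natxorC]
  · -- XOR = 0 → Losing
    intro hX
    rw [Losing]
    intro w' hmv hL'
    obtain ⟨v, hle, hnon, hlt⟩ := hmv
    set i : Fin n := Sum.elim id Sigma.fst v with hi
    have hsame : ∀ e : Σ j : Fin n, Fin (ℓ j), e.1 ≠ i → w' e = w e := by
      intro e he
      apply hnon
      intro hinc
      cases v with
      | inl a =>
        rcases hinc with h1 | h1
        · exact he (by rw [Sum.inl.injEq] at h1; rw [← h1]; rfl)
        · exact Sum.inl_ne_inr h1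
      | inr b =>
        rcases hinc with h1 | h1
        · exact Sum.inr_ne_inl h1
        · rw [Sum.inr.injEq] at h1
          exact he (by rw [← h1]; rfl)
    set q : Fin n → ℕ := fun j => ∑ t : Fin (ℓ j), w' ⟨j, t⟩ with hq
    have hqj : ∀ j, j ≠ i → q j = p j := by
      intro j hj
      exact Finset.sum_congr rfl fun t _ => hsame ⟨j, t⟩ hj
    have hqi : q i < p i := by
      rw [hsig, hsig] at hlt
      rw [← Finset.add_sum_erase _ _ (Finset.mem_univ i), ← Finset.add_sum_erase _ _ (Finset.mem_univ i)] at hlt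
      have hrest : ∑ j ∈ Finset.univ.erase i, ∑ t : Fin (ℓ j), w' ⟨j, t⟩
          = ∑ j ∈ Finset.univ.erase i, ∑ t : Fin (ℓ j), w ⟨j, t⟩ :=
        Finset.sum_congr rfl fun j hj => hqj j (Finset.ne_of_mem_erase hj)
      rw [hrest] at hlt
      have h1 : ∑ t : Fin (ℓ i), w' ⟨i, t⟩ = q i := rfl
      have h2 : ∑ t : Fin (ℓ i), w ⟨i, t⟩ = p i := rfl
      omega
    have hfold : (List.ofFn q).foldr (· ^^^ ·) 0 = 0 ^^^ p i ^^^ q i := by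
      rw [foldr_xor_update p q i hqj, hX]
    have hne : (List.ofFn q).foldr (· ^^^ ·) 0 ≠ 0 := by
      rw [hfold, Nat.zero_xor]
      intro hcon
      exact absurd (xor_eq_zero_iff.mp hcon) (Nat.ne_of_gt hqi)
    have hsumlt' : ∑ e, w' e < s := hw ▸ hlt
    have := ih (∑ e, w' e) hsumlt' w' rfl
    rw [this] at hL'
    exact hne hL'
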